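/- For every positive integer ν, the total number of n-colour compositions of ν equals the Fibonacci number F_{2ν} (with F_0 = 0, F_1 = 1, F_n = F_{n-1} + F_{n-2}). -/
import Mathlib

open Finset

/-- An n-colour composition of `ν` is a list of pairs `(p, c)` with `1 ≤ c ≤ p`
whose parts `p` sum to `ν`. -/
def IsNColourComposition (ν : ℕ) (l : List (ℕ × ℕ)) : Prop :=
  (∀ pc ∈ l, 1 ≤ pc.2 ∧ pc.2 ≤ pc.1) ∧ (l.map Prod.fst).sum = ν

/-- The finset of all n-colour compositions of `n`. -/
def comps : ℕ → Finset (List (ℕ × ℕ))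
  | 0 => {[]}
  | n + 1 =>
    (Finset.Icc 1 (n + 1)).attach.biUnion fun p =>
      (Finset.Icc 1 p.1).biUnion fun c =>
        (comps (n + 1 - p.1)).image fun l => (p.1, c) :: l
decreasing_by
  have := (Finset.mem_Icc.mp p.2).1
  omega

lemma mem_comps : ∀ n (l : List (ℕ × ℕ)), l ∈ comps n ↔ IsNColourComposition n l := by
  intro n
  induction n using Nat.strong_induction_on with
  | _ n ih =>
    match n with
    | 0 =>
      intro l
      rcases l with _ | ⟨⟨p, c⟩, t⟩
      · simp [comps, IsNColourComposition]
      · simp only [comps, Finset.mem_singleton, IsNColourComposition]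
        constructor
        · intro h; exact absurd h (by simp)
        · rintro ⟨h1, h2⟩
          have hp := h1 (p, c) (by simp)
          simp at h2
          omega
    | m + 1 =>
      intro l
      rw [comps]
      simp only [Finset.mem_biUnion, Finset.mem_attach, Finset.mem_image, true_and,
        Subtype.exists, Finset.mem_Icc]
      constructor
      · rintro ⟨p, hp, c, hc, l', hl', rfl⟩
        have hrec := (ih (m + 1 - p) (by omega) l').mp hl'
        obtain ⟨h1, h2⟩ := hrec
        refine ⟨?_, ?_⟩
        · rintro pc hpc
          rw [List.mem_cons] at hpc
          rcases hpc with h | h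
          · subst h; simp; omega
          · exact h1 pc h
        · simp [h2]; omega
      · rintro ⟨h1, h2⟩
        rcases l with _ | ⟨⟨p, c⟩, t⟩
        · simp at h2
        · have hpc := h1 (p, c) (by simp)
          simp at hpc h2
          refine ⟨p, ⟨by omega, by omega⟩, c, ⟨by omega, by omega⟩, t, ?_, rfl⟩
          refine (ih (m + 1 - p) (by omega) t).mpr ⟨fun pc h => h1 pc (by simp [h]), ?_⟩
          omega

lemma card_comps_succ (n : ℕ) :
    (comps (n + 1)).card = ∑ p ∈ Finset.Icc 1 (n + 1), p * (comps (n + 1 - p)).card := by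
  rw [comps]
  rw [Finset.card_biUnion]
  · rw [← Finset.sum_attach (Finset.Icc 1 (n + 1)) (fun p => p * (comps (n + 1 - p)).card)]
    apply Finset.sum_congr rfl
    intro p _
    rw [Finset.card_biUnion]
    · have : ∀ c ∈ Finset.Icc 1 p.1,
          ((comps (n + 1 - p.1)).image fun l => (p.1, c) :: l).card = (comps (n + 1 - p.1)).card := by
        intro c _
        apply Finset.card_image_of_injective
        intro a b h; simpa using h
      rw [Finset.sum_congr rfl this, Finset.sum_const, Nat.card_Icc]
      simp [Nat.smul_one_eq_cast]
    · intro c1 h1 c2 h2 hne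
      simp only [Finset.disjoint_left, Finset.mem_image]
      rintro l ⟨a, _, rfl⟩ ⟨b, _, hb⟩
      injection hb with h _
      exact hne (by injection h with _ h2; exact h2.symm)
  · intro p1 _ p2 _ hne
    simp only [Finset.disjoint_left, Finset.mem_biUnion, Finset.mem_image]
    rintro l ⟨c1, _, a, _, rfl⟩ ⟨c2, _, b, _, hb⟩
    injection hb with h _
    injection h with h _
    exact hne (Subtype.ext h.symm)

lemma fib_step (a b c : ℕ) (h1 : c = a + 2) (h2 : b = a + 1) :
    Nat.fib c = Nat.fib b + Nat.fib a := by
  subst h1; subst h2; rw [Nat.fib_add_two]; omega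

/-- helper value -/
def bfn (n : ℕ) : ℕ := if n = 0 then 1 else Nat.fib (2 * n)

lemma bsum (n : ℕ) : ∑ k ∈ Finset.range (n + 1), bfn k = Nat.fib (2 * n + 1) := by
  induction n with
  | zero => simp [bfn]
  | succ n ih =>
    rw [Finset.sum_range_succ, ih]
    have h1 : bfn (n + 1) = Nat.fib (2 * (n + 1)) := by simp [bfn]
    rw [h1, fib_step (2 * n + 1) (2 * (n + 1)) (2 * (n + 1) + 1) (by ring) (by ring)]
    omega

lemma main_sum (n : ℕ) :
    ∑ i ∈ Finset.range (n + 1), (i + 1) * bfn (n - i) = Nat.fib (2 * (n + 1)) := by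
  induction n with
  | zero => simp [bfn]
  | succ n ih =>
    rw [Finset.sum_range_succ' (fun i => (i + 1) * bfn (n + 1 - i)) (n + 1)]
    have e1 : ∀ i ∈ Finset.range (n + 1),
        (i + 1 + 1) * bfn (n + 1 - (i + 1)) = (i + 1) * bfn (n - i) + bfn (n - i) := by
      intro i hi
      have : n + 1 - (i + 1) = n - i := by omega
      rw [this]; ring
    rw [Finset.sum_congr rfl e1, Finset.sum_add_distrib, ih]
    have e2 : ∑ i ∈ Finset.range (n + 1), bfn (n - i) = ∑ i ∈ Finset.range (n + 1), bfn i := by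
      exact Finset.sum_range_reflect bfn (n + 1)
    rw [e2, bsum]
    simp only [Nat.sub_zero, zero_add, one_mul]
    have hb : bfn (n + 1) = Nat.fib (2 * (n + 1)) := by simp [bfn]
    rw [hb,
      fib_step (2 * (n + 1)) (2 * (n + 1) + 1) (2 * (n + 1 + 1)) (by ring) rfl,
      fib_step (2 * n + 1) (2 * (n + 1)) (2 * (n + 1) + 1) (by ring) (by ring)]

lemma card_comps (n : ℕ) : (comps n).card = bfn n := by
  induction n using Nat.strong_induction_on with
  | _ n ih =>
    match n with
    | 0 => simp [comps, bfn]
    | m + 1 =>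
      rw [card_comps_succ]
      have e : ∀ p ∈ Finset.Icc 1 (m + 1),
          p * (comps (m + 1 - p)).card = p * bfn (m + 1 - p) := by
        intro p hp
        rw [Finset.mem_Icc] at hp
        rw [ih (m + 1 - p) (by omega)]
      rw [Finset.sum_congr rfl e]
      have : ∑ p ∈ Finset.Icc 1 (m + 1), p * bfn (m + 1 - p)
          = ∑ i ∈ Finset.range (m + 1), (i + 1) * bfn (m - i) := by
        refine Finset.sum_nbij' (fun p => p - 1) (fun i => i + 1) ?_ ?_ ?_ ?_ ?_ <;>
          simp only [Finset.mem_Icc, Finset.mem_range]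
        · intro p hp; omega
        · intro i hi; omega
        · intro p hp; omega
        · intro i hi; omega
        · intro p hp
          have h1 : p - 1 + 1 = p := by omega
          have h2 : m - (p - 1) = m + 1 - p := by omega
          rw [h1, h2]
      rw [this, main_sum, bfn]
      simp

theorem ncolour_compositions_eq_fib (ν : ℕ) (hν : 1 ≤ ν) :
    Nat.card {l : List (ℕ × ℕ) // IsNColourComposition ν l} = Nat.fib (2 * ν) := by
  have e : {l : List (ℕ × ℕ) // IsNColourComposition ν l} ≃ {l // l ∈ comps ν} :=
    Equiv.subtypeEquivRight fun l => (mem_comps ν l).symm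
  rw [Nat.card_congr e, Nat.card_eq_fintype_card, Fintype.card_coe, card_comps, bfn]
  simp
  omega
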